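/- Let n ≥ 1 and let G be a simple graph on vertex set V with |V| = n that is bipartite. Suppose there is a chord diagram on 2n points, i.e., a partition of Fin (2n) into n two-element blocks, together with a bijection between V and the blocks, such that two distinct vertices of V are adjacent in the complement of G if and only if their blocks interleave. Then there is a chord diagram on 2n points together with a bijection between V and its blocks such that two distinct vertices of V are adjacent in G if and only if their blocks interleave. -/

import Mathlib

/-- Two blocks (chords) of a chord diagram, given as unordered pairs of positions
`p = {p.1, p.2}` and `q = {q.1, q.2}` in `Fin N`, *interleave* if exactly one of the two
endpoints of `q` lies strictly between the two endpoints of `p` in the natural linear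
order on `Fin N`. -/
def Interleave {N : ℕ} (p q : Fin N × Fin N) : Prop :=
  Xor' (min p.1 p.2 < q.1 ∧ q.1 < max p.1 p.2) (min p.1 p.2 < q.2 ∧ q.2 < max p.1 p.2)

lemma subval' {n : ℕ} (hn : 0 < n) (a c : Fin (2*n)) :
    (c - a).val = if a.val ≤ c.val then c.val - a.val else c.val + 2*n - a.val := by
  have h1 := a.isLt; have h2 := c.isLt
  rw [Fin.sub_def]
  show ((2*n - a.val) + c.val) % (2*n) = _
  split_ifs with h
  · have e : (2*n - a.val) + c.val = (c.val - a.val) + 2*n := by omega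
    rw [e, Nat.add_mod_right, Nat.mod_eq_of_lt (by omega)]
  · have e : (2*n - a.val) + c.val = c.val + 2*n - a.val := by omega
    rw [e, Nat.mod_eq_of_lt (by omega)]

lemma interleave_iff_circ {n : ℕ} (hn : 0 < n) (a b c d : Fin (2*n))
    (hab : a ≠ b) (hca : c ≠ a) (hcb : c ≠ b) (hda : d ≠ a) (hdb : d ≠ b) :
    Interleave (a, b) (c, d) ↔
      Xor' ((c - a).val < (b - a).val) ((d - a).val < (b - a).val) := by
  have h1 := a.isLt; have h2 := b.isLt; have h3 := c.isLt; have h4 := d.isLt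
  have e1 : a.val ≠ b.val := fun h => hab (Fin.ext h)
  have e2 : c.val ≠ a.val := fun h => hca (Fin.ext h)
  have e3 : c.val ≠ b.val := fun h => hcb (Fin.ext h)
  have e4 : d.val ≠ a.val := fun h => hda (Fin.ext h)
  have e5 : d.val ≠ b.val := fun h => hdb (Fin.ext h)
  rcases lt_or_gt_of_ne hab with h | h
  · unfold Interleave Xor' Xor
    rw [min_eq_left h.le, max_eq_right h.le]
    simp only [Fin.lt_def, subval' hn]
    split_ifs <;> omega
  · unfold Interleave Xor' Xor
    rw [min_eq_right h.le, max_eq_left h.le]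
    simp only [Fin.lt_def, subval' hn]
    split_ifs <;> omega

lemma interleave_sub {n : ℕ} (hn : 0 < n) (r a b c d : Fin (2*n))
    (hab : a ≠ b) (hca : c ≠ a) (hcb : c ≠ b) (hda : d ≠ a) (hdb : d ≠ b) :
    Interleave (a - r, b - r) (c - r, d - r) ↔ Interleave (a, b) (c, d) := by
  haveI : NeZero (2*n) := ⟨by omega⟩
  rw [interleave_iff_circ hn _ _ _ _ (by simpa [sub_left_inj] using hab)
      (by simpa [sub_left_inj] using hca) (by simpa [sub_left_inj] using hcb)
      (by simpa [sub_left_inj] using hda) (by simpa [sub_left_inj] using hdb),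
    interleave_iff_circ hn a b c d hab hca hcb hda hdb,
    sub_sub_sub_cancel_right, sub_sub_sub_cancel_right, sub_sub_sub_cancel_right]

lemma no_interleave_of_split {n : ℕ} (p1 p2 q1 q2 : Fin (2*n))
    (h1 : p1.val < n) (h2 : p2.val < n) (h3 : n ≤ q1.val) (h4 : n ≤ q2.val) :
    ¬ Interleave (p1, p2) (q1, q2) := by
  unfold Interleave Xor' Xor
  rcases max_choice p1 p2 with h | h <;> rw [h] <;> simp only [Fin.lt_def] <;> omega

lemma interleave_swap_left {N : ℕ} (p1 p2 : Fin N) (q : Fin N × Fin N) :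
    Interleave (p1, p2) q ↔ Interleave (p2, p1) q := by
  unfold Interleave
  rw [min_comm, max_comm]

lemma interleave_swap_right {N : ℕ} (p : Fin N × Fin N) (q1 q2 : Fin N) :
    Interleave p (q1, q2) ↔ Interleave p (q2, q1) := by
  unfold Interleave Xor' Xor; tauto

lemma interleave_reflect {n : ℕ} (hn : 0 < n) (l1 h1 l2 h2 r1 r2 : Fin (2*n))
    (hl1 : l1.val < n) (hl2 : l2.val < n) (hh1 : n ≤ h1.val) (hh2 : n ≤ h2.val)
    (hll : l1 ≠ l2) (hhh : h1 ≠ h2)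
    (hr1 : r1.val = 3*n - 1 - h1.val) (hr2 : r2.val = 3*n - 1 - h2.val) :
    (Interleave (l1, r1) (l2, r2) ↔ ¬ Interleave (l1, h1) (l2, h2)) := by
  have b1 := h1.isLt; have b2 := h2.isLt
  have e1 : l1.val ≠ l2.val := fun h => hll (Fin.ext h)
  have e2 : h1.val ≠ h2.val := fun h => hhh (Fin.ext h)
  have m1 : min l1 h1 = l1 := min_eq_left (by rw [Fin.le_def]; omega)
  have m2 : max l1 h1 = h1 := max_eq_right (by rw [Fin.le_def]; omega)
  have m3 : min l1 r1 = l1 := min_eq_left (by rw [Fin.le_def]; omega)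
  have m4 : max l1 r1 = r1 := max_eq_right (by rw [Fin.le_def]; omega)
  unfold Interleave Xor' Xor
  simp only [m1, m2, m3, m4, Fin.lt_def]
  omega

lemma discrete_ivt (g : ℕ → ℕ) (k m : ℕ)
    (hstep : ∀ i, g (i+1) ≤ g i + 1)
    (h0 : g 0 ≤ k) (hm : k ≤ g m) : ∃ i, g i = k := by
  induction m with
  | zero => exact ⟨0, le_antisymm h0 hm⟩
  | succ m ih =>
    by_cases h : k ≤ g m
    · exact ih h
    · exact ⟨m+1, by have := hstep m; omega⟩

lemma window_step {n : ℕ} (hn : 0 < n) (S : Finset (Fin (2*n))) (c : Fin (2*n)) :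
    (S.filter fun x => (x - (c+⟨1, by omega⟩)).val < n).card
      ≤ (S.filter fun x => (x - c).val < n).card + 1 := by
  haveI : NeZero (2*n) := ⟨by omega⟩
  have hsub : S.filter (fun x => (x - (c+⟨1, by omega⟩)).val < n)
      ⊆ insert (c + ⟨n, by omega⟩) (S.filter fun x => (x - c).val < n) := by
    intro x hx
    rw [Finset.mem_filter] at hx
    rw [Finset.mem_insert, Finset.mem_filter]
    have e : x - (c + ⟨1, by omega⟩) = (x - c) - ⟨1, by omega⟩ := by rw [sub_sub]
    rw [e, subval' hn] at hx
    have hb := (x - c).isLt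
    by_cases hcase : (x - c).val < n
    · exact Or.inr ⟨hx.1, hcase⟩
    · left
      have hv : (⟨1, by omega⟩ : Fin (2*n)).val = 1 := rfl
      rw [hv] at hx
      have hxc : (x - c).val = n := by split_ifs at hx <;> omega
      have h2 : x - c = (⟨n, by omega⟩ : Fin (2*n)) := Fin.ext hxc
      rw [sub_eq_iff_eq_add] at h2
      rw [h2, add_comm]
  calc (S.filter fun x => (x - (c+⟨1, by omega⟩)).val < n).card
      ≤ _ := Finset.card_le_card hsub
    _ ≤ _ + 1 := Finset.card_insert_le _ _

lemma window_step' {n : ℕ} (hn : 0 < n) (S : Finset (Fin (2*n))) (c : Fin (2*n)) :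
    (S.filter fun x => (x - c).val < n).card
      ≤ (S.filter fun x => (x - (c+⟨1, by omega⟩)).val < n).card + 1 := by
  haveI : NeZero (2*n) := ⟨by omega⟩
  have hsub : S.filter (fun x => (x - c).val < n)
      ⊆ insert c (S.filter fun x => (x - (c+⟨1, by omega⟩)).val < n) := by
    intro x hx
    rw [Finset.mem_filter] at hx
    rw [Finset.mem_insert, Finset.mem_filter]
    by_cases hcase : x = c
    · exact Or.inl hcase
    · right
      refine ⟨hx.1, ?_⟩
      have hnz : (x - c).val ≠ 0 := by
        intro h0
        have : x - c = 0 := Fin.ext (by simpa using h0)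
        exact hcase (sub_eq_zero.mp this)
      have e : x - (c + ⟨1, by omega⟩) = (x - c) - ⟨1, by omega⟩ := by rw [sub_sub]
      rw [e, subval' hn]
      have hv : (⟨1, by omega⟩ : Fin (2*n)).val = 1 := rfl
      rw [hv]
      have := hx.2
      have hb := (x - c).isLt
      split_ifs <;> omega
  calc (S.filter fun x => (x - c).val < n).card ≤ _ := Finset.card_le_card hsub
    _ ≤ _ + 1 := Finset.card_insert_le _ _

lemma window_compl {n : ℕ} (hn : 0 < n) (S : Finset (Fin (2*n))) (c : Fin (2*n)) :
    (S.filter fun x => (x - c).val < n).card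
      + (S.filter fun x => (x - (c + ⟨n, by omega⟩)).val < n).card = S.card := by
  haveI : NeZero (2*n) := ⟨by omega⟩
  have key : ∀ x : Fin (2*n), ((x - (c + ⟨n, by omega⟩)).val < n) ↔ ¬ ((x - c).val < n) := by
    intro x
    have e : x - (c + ⟨n, by omega⟩) = (x - c) - ⟨n, by omega⟩ := by rw [sub_sub]
    have hb := (x - c).isLt
    rw [e, subval' hn]
    have hv : (⟨n, by omega⟩ : Fin (2*n)).val = n := rfl
    rw [hv]
    split_ifs with h <;> omega
  have heq : (S.filter fun x => (x - (c + ⟨n, by omega⟩)).val < n)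
      = S.filter fun x => ¬ ((x - c).val < n) := by
    apply Finset.filter_congr; intro x _; exact key x
  rw [heq, Finset.card_filter_add_card_filter_not]

lemma card_window_univ {n : ℕ} :
    ((Finset.univ : Finset (Fin (2*n))).filter fun x => x.val < n).card = n := by
  have hle : n ≤ 2*n := by omega
  have : ((Finset.univ : Finset (Fin (2*n))).filter fun x => x.val < n)
      = (Finset.univ : Finset (Fin n)).image (Fin.castLE hle) := by
    ext x
    simp only [Finset.mem_filter, Finset.mem_image, Finset.mem_univ, true_and]
    constructor
    · intro h; exact ⟨⟨x.val, h⟩, rfl⟩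
    · rintro ⟨y, rfl⟩; exact y.isLt
  rw [this, Finset.card_image_of_injective _ (Fin.castLE_injective hle),
    Finset.card_univ, Fintype.card_fin]

lemma class_split {V : Type*} [DecidableEq V] {n : ℕ} (D : Finset V)
    (ea eb : V → Fin (2*n))
    (hia : Set.InjOn ea D) (hib : Set.InjOn eb D)
    (hne : ∀ u ∈ D, ∀ v ∈ D, ea u ≠ eb v)
    (hcross : ∀ u ∈ D, ∀ v ∈ D, u ≠ v → Interleave (ea u, eb u) (ea v, eb v))
    (hcount : ((D.image ea ∪ D.image eb).filter fun x => x.val < n).card = D.card) :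
    ∀ v ∈ D, ((ea v).val < n ∧ n ≤ (eb v).val) ∨ ((eb v).val < n ∧ n ≤ (ea v).val) := by
  classical
  set D1 := D.filter (fun v => (ea v).val < n) with hD1
  set D2 := D.filter (fun v => (eb v).val < n) with hD2
  have i1 : (D.image ea).filter (fun x => x.val < n) = D1.image ea := by
    ext x
    simp only [Finset.mem_filter, Finset.mem_image, hD1]
    constructor
    · rintro ⟨⟨v, hv, rfl⟩, hlt⟩; exact ⟨v, ⟨hv, hlt⟩, rfl⟩
    · rintro ⟨v, ⟨hv, hlt⟩, rfl⟩; exact ⟨⟨v, hv, rfl⟩, hlt⟩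
  have i2 : (D.image eb).filter (fun x => x.val < n) = D2.image eb := by
    ext x
    simp only [Finset.mem_filter, Finset.mem_image, hD2]
    constructor
    · rintro ⟨⟨v, hv, rfl⟩, hlt⟩; exact ⟨v, ⟨hv, hlt⟩, rfl⟩
    · rintro ⟨v, ⟨hv, hlt⟩, rfl⟩; exact ⟨⟨v, hv, rfl⟩, hlt⟩
  have hdisj : Disjoint ((D.image ea).filter (fun x => x.val < n))
      ((D.image eb).filter (fun x => x.val < n)) := by
    rw [Finset.disjoint_left]
    rintro x hx1 hx2
    rw [Finset.mem_filter] at hx1 hx2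
    obtain ⟨u, hu, rfl⟩ := Finset.mem_image.mp hx1.1
    obtain ⟨v, hv, hvx⟩ := Finset.mem_image.mp hx2.1
    exact hne u hu v hv hvx.symm
  have hsum : D1.card + D2.card = D.card := by
    rw [← hcount, Finset.filter_union, Finset.card_union_of_disjoint hdisj, i1, i2,
      Finset.card_image_of_injOn (hia.mono (Finset.coe_subset.mpr (Finset.filter_subset _ _))),
      Finset.card_image_of_injOn (hib.mono (Finset.coe_subset.mpr (Finset.filter_subset _ _)))]
  intro v0 hv0
  by_cases hA : (ea v0).val < n <;> by_cases hB : (eb v0).val < n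
  · exfalso
    have hmem : v0 ∈ D1 ∩ D2 := by
      rw [Finset.mem_inter, hD1, hD2, Finset.mem_filter, Finset.mem_filter]
      exact ⟨⟨hv0, hA⟩, hv0, hB⟩
    have hex : ∃ w ∈ D, w ∉ D1 ∧ w ∉ D2 := by
      by_contra hno
      push_neg at hno
      have hsubU : D ⊆ D1 ∪ D2 := by
        intro w hw
        by_cases h : w ∈ D1
        · exact Finset.mem_union_left _ h
        · exact Finset.mem_union_right _ (hno w hw h)
      have h1 := Finset.card_le_card hsubU
      have h2 := Finset.card_union_add_card_inter D1 D2
      have h3 : 1 ≤ (D1 ∩ D2).card := Finset.card_pos.mpr ⟨v0, hmem⟩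
      omega
    obtain ⟨w, hw, hw1, hw2⟩ := hex
    rw [hD1, Finset.mem_filter] at hw1
    rw [hD2, Finset.mem_filter] at hw2
    have hwa : n ≤ (ea w).val := le_of_not_gt (fun h => hw1 ⟨hw, h⟩)
    have hwb : n ≤ (eb w).val := le_of_not_gt (fun h => hw2 ⟨hw, h⟩)
    have hne' : v0 ≠ w := by
      rintro rfl; exact hw1 ⟨hv0, hA⟩
    exact no_interleave_of_split _ _ _ _ hA hB hwa hwb (hcross v0 hv0 w hw hne')
  · exact Or.inl ⟨hA, by omega⟩
  · exact Or.inr ⟨hB, by omega⟩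
  · exfalso
    have hv0' : v0 ∉ D1 ∪ D2 := by
      rw [Finset.mem_union, hD1, hD2, Finset.mem_filter, Finset.mem_filter]
      rintro (⟨_, h⟩ | ⟨_, h⟩) <;> omega
    have hex : ∃ w, w ∈ D1 ∩ D2 := by
      by_contra hno
      push_neg at hno
      have hinter : D1 ∩ D2 = ∅ := Finset.eq_empty_of_forall_notMem hno
      have hsubU : D1 ∪ D2 ⊆ D.erase v0 := by
        intro w hw
        rw [Finset.mem_erase]
        constructor
        · rintro rfl; exact hv0' hw
        · rcases Finset.mem_union.mp hw with h | h
          · exact (Finset.mem_filter.mp h).1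
          · exact (Finset.mem_filter.mp h).1
      have h1 := Finset.card_le_card hsubU
      have h2 := Finset.card_union_add_card_inter D1 D2
      have h3 := Finset.card_erase_of_mem hv0
      have h4 : 1 ≤ D.card := Finset.card_pos.mpr ⟨v0, hv0⟩
      rw [hinter] at h2
      simp at h2
      omega
    obtain ⟨w, hw⟩ := hex
    rw [Finset.mem_inter, hD1, hD2, Finset.mem_filter, Finset.mem_filter] at hw
    obtain ⟨⟨hwD, hwa⟩, _, hwb⟩ := hw
    have hne' : w ≠ v0 := by
      rintro rfl; omega
    exact no_interleave_of_split _ _ _ _ hwa hwb (by omega) (by omega)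
      (hcross w hwD v0 hv0 hne')

/-- Let `G` be a bipartite graph on `n ≥ 1` vertices. If there is a chord diagram on `2n`
points (a partition of `Fin (2n)` into `n` two-element blocks, encoded by the endpoint maps
`a b : V → Fin (2n)` with `Sum.elim a b` bijective, the block of `v` being `{a v, b v}`)
representing the complement of `G` (two distinct vertices are adjacent in `Gᶜ` iff their
blocks interleave), then there is a chord diagram on `2n` points representing `G`. -/
theorem bipartite_complement_of_chord_diagram {V : Type*} [Fintype V] (n : ℕ) (hn : 1 ≤ n)
    (hcard : Fintype.card V = n) (G : SimpleGraph V) (hbip : G.chromaticNumber ≤ 2)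
    (a b : V → Fin (2 * n)) (hbij : Function.Bijective (Sum.elim a b))
    (hrep : ∀ u v : V, u ≠ v → (Gᶜ.Adj u v ↔ Interleave (a u, b u) (a v, b v))) :
    ∃ a' b' : V → Fin (2 * n), Function.Bijective (Sum.elim a' b') ∧
      ∀ u v : V, u ≠ v → (G.Adj u v ↔ Interleave (a' u, b' u) (a' v, b' v)) := by
  classical
  have hn' : 0 < n := hn
  haveI : NeZero (2*n) := ⟨by omega⟩
  have hcol : G.Colorable 2 := by
    have h2 : ((2:ℕ):ℕ∞) = 2 := by norm_num
    rw [← h2, SimpleGraph.chromaticNumber_le_iff_colorable] at hbip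
    exact hbip
  obtain ⟨C⟩ := hcol
  have hinj := hbij.injective
  have haa : ∀ u v : V, a u = a v → u = v := fun u v h =>
    Sum.inl_injective (hinj (show Sum.elim a b (Sum.inl u) = Sum.elim a b (Sum.inl v) from h))
  have hbb : ∀ u v : V, b u = b v → u = v := fun u v h =>
    Sum.inr_injective (hinj (show Sum.elim a b (Sum.inr u) = Sum.elim a b (Sum.inr v) from h))
  have hab2 : ∀ u v : V, a u ≠ b v := fun u v h => by
    have := hinj (show Sum.elim a b (Sum.inl u) = Sum.elim a b (Sum.inr v) from h)
    simp at this
  have hmono : ∀ u v : V, u ≠ v → C u = C v → Interleave (a u, b u) (a v, b v) := by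
    intro u v huv hc
    apply (hrep u v huv).mp
    rw [SimpleGraph.compl_adj]
    exact ⟨huv, fun h => C.valid h hc⟩
  set A : Finset V := Finset.univ.filter (fun v => C v = 0) with hA
  set B' : Finset V := Finset.univ.filter (fun v => ¬ C v = 0) with hB'
  set k := A.card with hk
  set S : Finset (Fin (2*n)) := A.image a ∪ A.image b with hS
  have hScard : S.card = 2 * k := by
    rw [hS, Finset.card_union_of_disjoint, Finset.card_image_of_injective _ (fun u v h => haa u v h),
      Finset.card_image_of_injective _ (fun u v h => hbb u v h)]
    · omega
    · rw [Finset.disjoint_left]; rintro x hx1 hx2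
      obtain ⟨u, _, rfl⟩ := Finset.mem_image.mp hx1
      obtain ⟨v, _, hv⟩ := Finset.mem_image.mp hx2
      exact hab2 u v hv.symm
  set F : Fin (2*n) → ℕ := fun c => (S.filter fun x => (x - c).val < n).card with hF
  have hstepF : ∀ (c : Fin (2*n)), F (c + 1) ≤ F c + 1 ∧ F c ≤ F (c+1) + 1 := by
    intro c
    have e : (⟨1, by omega⟩ : Fin (2*n)) = 1 :=
      Fin.ext (by rw [Fin.val_one']; exact (Nat.mod_eq_of_lt (by omega)).symm)
    constructor
    · have := window_step hn' S c; rwa [e] at this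
    · have := window_step' hn' S c; rwa [e] at this
  open Fin.NatCast in
  have hnn : (⟨n, by omega⟩ : Fin (2*n)) = ((n:ℕ) : Fin (2*n)) :=
    Fin.ext (by rw [Fin.val_cast_of_lt (by omega)])
  open Fin.NatCast in
  have hcomplF : ∀ c : Fin (2*n), F c + F (c + ((n:ℕ):Fin (2*n))) = 2*k := by
    intro c
    have := window_compl hn' S c
    rwa [hnn, hScard] at this
  open Fin.NatCast in
  obtain ⟨cstar, hcstar⟩ : ∃ c : Fin (2*n), F c = k := by
    have hstep1 : ∀ (c0 : Fin (2*n)) (i : ℕ),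
        F (c0 + ((i+1:ℕ) : Fin (2*n))) ≤ F (c0 + ((i:ℕ) : Fin (2*n))) + 1 := by
      intro c0 i
      have e : c0 + ((i+1:ℕ) : Fin (2*n)) = (c0 + ((i:ℕ) : Fin (2*n))) + 1 := by
        rw [Nat.cast_succ, add_assoc]
      rw [e]; exact (hstepF _).1
    rcases le_or_gt (F 0) k with h0 | h0
    · have hmid : k ≤ F ((n:ℕ) : Fin (2*n)) := by
        have := hcomplF 0
        rw [zero_add] at this; omega
      obtain ⟨i, hi⟩ := discrete_ivt (fun i => F ((0 : Fin (2*n)) + ((i:ℕ) : Fin (2*n)))) k n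
        (fun i => hstep1 0 i) (by simpa using h0) (by simpa using hmid)
      exact ⟨_, hi⟩
    · have hmid : F ((n:ℕ) : Fin (2*n)) ≤ k := by
        have := hcomplF 0
        rw [zero_add] at this; omega
      have hend : k ≤ F (((n:ℕ) : Fin (2*n)) + ((n:ℕ) : Fin (2*n))) := by
        have e : ((n:ℕ) : Fin (2*n)) + ((n:ℕ) : Fin (2*n)) = 0 := by
          rw [← Nat.cast_add, show n + n = 2*n from by ring, Fin.natCast_self]
        rw [e]; omega
      obtain ⟨i, hi⟩ := discrete_ivt (fun i => F (((n:ℕ) : Fin (2*n)) + ((i:ℕ) : Fin (2*n)))) k n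
        (fun i => hstep1 _ i) (by simpa using hmid) (by simpa using hend)
      exact ⟨_, hi⟩
  set ea : V → Fin (2*n) := fun v => a v - cstar with hea
  set eb : V → Fin (2*n) := fun v => b v - cstar with heb
  have haa' : ∀ u v : V, ea u = ea v → u = v := fun u v h =>
    haa u v (by rw [hea] at h; simpa [sub_left_inj] using h)
  have hbb' : ∀ u v : V, eb u = eb v → u = v := fun u v h =>
    hbb u v (by rw [heb] at h; simpa [sub_left_inj] using h)
  have hab2' : ∀ u v : V, ea u ≠ eb v := fun u v h =>
    hab2 u v (by rw [hea, heb] at h; simpa [sub_left_inj] using h)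
  have hsubiff : ∀ u v : V, u ≠ v →
      (Interleave (ea u, eb u) (ea v, eb v) ↔ Interleave (a u, b u) (a v, b v)) := by
    intro u v huv
    exact interleave_sub hn' cstar (a u) (b u) (a v) (b v) (hab2 u u)
      (fun h => huv ((haa v u h).symm)) (hab2 v u)
      (fun h => hab2 u v h.symm) (fun h => huv ((hbb v u h).symm))
  have hmono' : ∀ u v : V, u ≠ v → C u = C v → Interleave (ea u, eb u) (ea v, eb v) := by
    intro u v huv hc
    exact (hsubiff u v huv).mpr (hmono u v huv hc)
  -- counting transported to rotated coordinates
  have himg : ∀ T : Finset (Fin (2*n)),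
      ((T.image (fun x => x - cstar)).filter fun x => x.val < n).card
        = (T.filter fun x => (x - cstar).val < n).card := by
    intro T
    have e : ((T.image (fun x => x - cstar)).filter fun x => x.val < n)
        = (T.filter fun x => (x - cstar).val < n).image (fun x => x - cstar) := by
      ext x
      simp only [Finset.mem_filter, Finset.mem_image]
      constructor
      · rintro ⟨⟨y, hy, rfl⟩, h⟩; exact ⟨y, ⟨hy, h⟩, rfl⟩
      · rintro ⟨y, ⟨hy, h⟩, rfl⟩; exact ⟨⟨y, hy, rfl⟩, h⟩
    rw [e, Finset.card_image_of_injective _ sub_left_injective]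
  have hSA : (A.image ea ∪ A.image eb) = S.image (fun x => x - cstar) := by
    rw [hS, Finset.image_union, Finset.image_image, Finset.image_image]
    rfl
  have hcountA : ((A.image ea ∪ A.image eb).filter fun x => x.val < n).card = A.card := by
    rw [hSA, himg S]
    exact hcstar
  have hbij2 : Function.Bijective (Sum.elim ea eb) := by
    have e : Sum.elim ea eb = (fun x => x - cstar) ∘ Sum.elim a b := by
      funext w; cases w <;> rfl
    rw [e]
    exact (Equiv.subRight cstar).bijective.comp hbij
  have hpart : (A.image ea ∪ A.image eb) ∪ (B'.image ea ∪ B'.image eb) = Finset.univ := by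
    apply Finset.eq_univ_of_forall
    intro x
    obtain ⟨w, rfl⟩ := hbij2.surjective x
    cases w with
    | inl v =>
      simp only [Sum.elim_inl, Finset.mem_union, Finset.mem_image]
      by_cases h : C v = 0
      · exact Or.inl (Or.inl ⟨v, Finset.mem_filter.mpr ⟨Finset.mem_univ v, h⟩, rfl⟩)
      · exact Or.inr (Or.inl ⟨v, Finset.mem_filter.mpr ⟨Finset.mem_univ v, h⟩, rfl⟩)
    | inr v =>
      simp only [Sum.elim_inr, Finset.mem_union, Finset.mem_image]
      by_cases h : C v = 0
      · exact Or.inl (Or.inr ⟨v, Finset.mem_filter.mpr ⟨Finset.mem_univ v, h⟩, rfl⟩)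
      · exact Or.inr (Or.inr ⟨v, Finset.mem_filter.mpr ⟨Finset.mem_univ v, h⟩, rfl⟩)
  have hdisjALL : Disjoint (A.image ea ∪ A.image eb) (B'.image ea ∪ B'.image eb) := by
    rw [Finset.disjoint_left]
    intro x hx1 hx2
    have hget : ∀ (D : Finset V), x ∈ D.image ea ∪ D.image eb → ∃ v ∈ D, ea v = x ∨ eb v = x := by
      intro D hD
      rcases Finset.mem_union.mp hD with h | h
      · obtain ⟨v, hv, he⟩ := Finset.mem_image.mp h; exact ⟨v, hv, Or.inl he⟩
      · obtain ⟨v, hv, he⟩ := Finset.mem_image.mp h; exact ⟨v, hv, Or.inr he⟩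
    obtain ⟨v, hv, hv'⟩ := hget A hx1
    obtain ⟨w, hw, hw'⟩ := hget B' hx2
    have hvw : v = w := by
      rcases hv' with h1 | h1 <;> rcases hw' with h2 | h2
      · exact haa' v w (h1.trans h2.symm)
      · exact absurd (h1.trans h2.symm) (hab2' v w)
      · exact absurd (h2.trans h1.symm) (hab2' w v)
      · exact hbb' v w (h1.trans h2.symm)
    rw [hA, Finset.mem_filter] at hv
    rw [hB', Finset.mem_filter] at hw
    rw [hvw] at hv
    exact hw.2 hv.2
  have hcountB : ((B'.image ea ∪ B'.image eb).filter fun x => x.val < n).card = B'.card := by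
    have e1 : ((Finset.univ : Finset (Fin (2*n))).filter fun x => x.val < n)
        = ((A.image ea ∪ A.image eb).filter fun x => x.val < n)
          ∪ ((B'.image ea ∪ B'.image eb).filter fun x => x.val < n) := by
      rw [← Finset.filter_union, hpart]
    have e2 := card_window_univ (n := n)
    rw [e1, Finset.card_union_of_disjoint
      (hdisjALL.mono (Finset.filter_subset _ _) (Finset.filter_subset _ _)), hcountA] at e2
    have e3 : A.card + B'.card = n := by
      rw [hA, hB', Finset.card_filter_add_card_filter_not, Finset.card_univ, hcard]
    omega
  -- the key property : every chord is split by the threshold n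
  have hfin2 : ∀ i : Fin 2, ¬ i = 0 → i = 1 := by decide
  have key : ∀ v : V, ((ea v).val < n ∧ n ≤ (eb v).val) ∨ ((eb v).val < n ∧ n ≤ (ea v).val) := by
    intro v
    by_cases h : C v = 0
    · refine class_split A ea eb (fun u _ v _ h => haa' u v h) (fun u _ v _ h => hbb' u v h)
        (fun u _ v _ => hab2' u v) ?_ hcountA v (Finset.mem_filter.mpr ⟨Finset.mem_univ v, h⟩)
      intro u hu w hw huw
      rw [hA, Finset.mem_filter] at hu hw
      exact hmono' u w huw (hu.2.trans hw.2.symm)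
    · refine class_split B' ea eb (fun u _ v _ h => haa' u v h) (fun u _ v _ h => hbb' u v h)
        (fun u _ v _ => hab2' u v) ?_ hcountB v (Finset.mem_filter.mpr ⟨Finset.mem_univ v, h⟩)
      intro u hu w hw huw
      rw [hB', Finset.mem_filter] at hu hw
      exact hmono' u w huw ((hfin2 _ hu.2).trans (hfin2 _ hw.2).symm)
  set lo : V → Fin (2*n) := fun v => if (ea v).val < n then ea v else eb v with hlo_def
  set hi : V → Fin (2*n) := fun v => if (ea v).val < n then eb v else ea v with hhi_def
  have hlo : ∀ v, (lo v).val < n := by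
    intro v
    rcases key v with ⟨h1, h2⟩ | ⟨h1, h2⟩
    · simp only [hlo_def]; rw [if_pos h1]; exact h1
    · simp only [hlo_def]; rw [if_neg (not_lt.mpr h2)]; exact h1
  have hhi : ∀ v, n ≤ (hi v).val := by
    intro v
    rcases key v with ⟨h1, h2⟩ | ⟨h1, h2⟩
    · simp only [hhi_def]; rw [if_pos h1]; exact h2
    · simp only [hhi_def]; rw [if_neg (not_lt.mpr h2)]; exact h2
  set ref : Fin (2*n) → Fin (2*n) :=
    fun z => if h : n ≤ z.val then ⟨3*n - 1 - z.val, by have := z.isLt; omega⟩ else z with href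
  have hrefval : ∀ z : Fin (2*n), n ≤ z.val → (ref z).val = 3*n - 1 - z.val := by
    intro z hz
    simp only [href]
    rw [dif_pos hz]
  have hrefhi : ∀ z : Fin (2*n), n ≤ z.val → n ≤ (ref z).val := by
    intro z hz
    rw [hrefval z hz]
    have := z.isLt; omega
  have hrefinj : ∀ z w : Fin (2*n), n ≤ z.val → n ≤ w.val → ref z = ref w → z = w := by
    intro z w hz hw h
    apply Fin.ext
    have h2 := congrArg Fin.val h
    rw [hrefval z hz, hrefval w hw] at h2
    have hz2 := z.isLt; have hw2 := w.isLt
    omega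
  -- distinctness of the new endpoints
  have hlone : ∀ u v : V, u ≠ v → lo u ≠ lo v := by
    intro u v huv
    simp only [hlo_def]
    split_ifs
    · exact fun h => huv (haa' u v h)
    · exact hab2' u v
    · exact fun h => hab2' v u h.symm
    · exact fun h => huv (hbb' u v h)
  have hhine : ∀ u v : V, u ≠ v → hi u ≠ hi v := by
    intro u v huv
    simp only [hhi_def]
    split_ifs
    · exact fun h => huv (hbb' u v h)
    · exact fun h => hab2' v u h.symm
    · exact hab2' u v
    · exact fun h => huv (haa' u v h)
  refine ⟨lo, fun v => ref (hi v), ?_, ?_⟩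
  · rw [Fintype.bijective_iff_injective_and_card]
    constructor
    · intro x y h
      cases x with
      | inl u =>
        cases y with
        | inl v =>
          simp only [Sum.elim_inl] at h
          by_contra hne2
          exact hlone u v (fun he => hne2 (by rw [he])) h
        | inr v =>
          simp only [Sum.elim_inl, Sum.elim_inr] at h
          have h1 := hlo u
          have h2 := hrefhi _ (hhi v)
          rw [congrArg Fin.val h] at h1
          omega
      | inr u =>
        cases y with
        | inl v =>
          simp only [Sum.elim_inl, Sum.elim_inr] at h
          have h1 := hlo v
          have h2 := hrefhi _ (hhi u)
          rw [← congrArg Fin.val h] at h1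
          omega
        | inr v =>
          simp only [Sum.elim_inr] at h
          by_contra hne2
          have := hrefinj _ _ (hhi u) (hhi v) h
          exact hhine u v (fun he => hne2 (by rw [he])) this
    · rw [Fintype.card_sum, hcard, Fintype.card_fin]
      omega
  · intro u v huv
    have h1 : G.Adj u v ↔ ¬ Interleave (a u, b u) (a v, b v) := by
      rw [← hrep u v huv, SimpleGraph.compl_adj]
      constructor
      · intro h hc; exact hc.2 h
      · intro h; by_contra hadj; exact h ⟨huv, hadj⟩
    have h3 : Interleave (ea u, eb u) (ea v, eb v) ↔ Interleave (lo u, hi u) (lo v, hi v) := by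
      simp only [hlo_def, hhi_def]
      split_ifs
      · exact Iff.rfl
      · exact interleave_swap_right _ _ _
      · exact interleave_swap_left _ _ _
      · exact (interleave_swap_left (ea u) (eb u) (ea v, eb v)).trans
          (interleave_swap_right (eb u, ea u) (ea v) (eb v))
    have h5 := interleave_reflect hn' (lo u) (hi u) (lo v) (hi v) (ref (hi u)) (ref (hi v))
      (hlo u) (hlo v) (hhi u) (hhi v) (hlone u v huv) (hhine u v huv)
      (hrefval _ (hhi u)) (hrefval _ (hhi v))
    show G.Adj u v ↔ Interleave (lo u, ref (hi u)) (lo v, ref (hi v))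
    rw [h5, ← h3, hsubiff u v huv, h1]
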